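/- Let N ≥ 1, let S ⊆ ℝ^N be compact, let h ∈ B_S, and let D ⊆ ℝ^N be a bounded measurable set with nonempty interior. Then h is the unique fixed point of the operator T_h^{(D)} on B_S: T_h^{(D)} h = h, and any f ∈ B_S satisfying T_h^{(D)} f = f equals h almost everywhere. -/

import Mathlib

open MeasureTheory FourierTransform Filter

noncomputable section

/-- The Hilbert space `L²(ℝᴺ; ℂ)` of square-integrable functions on `ℝᴺ`. -/
abbrev L2Space (N : ℕ) : Type :=
  Lp ℂ 2 (volume : Measure (EuclideanSpace ℝ (Fin N)))

/-- `f ∈ L²(ℝᴺ)` is bandlimited to `S`: its Fourier transform vanishes (a.e.) outside `S`;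
equivalently, `f` agrees a.e. with the inverse Fourier transform of an integrable function `F`
vanishing outside `S`. -/
def IsBandlimited {N : ℕ} (S : Set (EuclideanSpace ℝ (Fin N))) (f : L2Space N) : Prop :=
  ∃ F : EuclideanSpace ℝ (Fin N) → ℂ,
    Integrable F ∧ (∀ k, k ∉ S → F k = 0) ∧
      (f : EuclideanSpace ℝ (Fin N) → ℂ) =ᵐ[volume] 𝓕⁻ F

/-- Multiplication of `f ∈ L²` by the indicator function `χ_D`, as an element of `L²`. -/
def chiMul {N : ℕ} {D : Set (EuclideanSpace ℝ (Fin N))} (hD : MeasurableSet D)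
    (f : L2Space N) : L2Space N :=
  ((Lp.memLp f).indicator hD).toLp (D.indicator f)

/-- The orthogonal projection of `L²(ℝᴺ)` onto a closed subspace `K`. -/
def projOf {N : ℕ} (K : Submodule ℂ (L2Space N)) (hK : IsClosed (K : Set (L2Space N))) :
    L2Space N → L2Space N :=
  haveI : CompleteSpace K := hK.completeSpace_coe
  fun f => (K.orthogonalProjectionOnto f : L2Space N)

/-- The operator `T_h^{(D)} f = P_S (f + χ_D (h − f))` (single region). -/
def Tsingle {N : ℕ} (K : Submodule ℂ (L2Space N)) (hK : IsClosed (K : Set (L2Space N)))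
    {D : Set (EuclideanSpace ℝ (Fin N))} (hD : MeasurableSet D)
    (h f : L2Space N) : L2Space N :=
  projOf K hK (f + chiMul hD (h - f))

section AuxCore

open Complex Real RealInnerProductSpace Topology

/-- Auxiliary: entire extension along a line of the inverse Fourier transform. -/
lemma fourierInv_zero_of_zero_on_open
    {F : EuclideanSpace ℝ (Fin N) → ℂ} (hF : Integrable F)
    {S : Set (EuclideanSpace ℝ (Fin N))} (hS : IsCompact S)
    (hsupp : ∀ k ∉ S, F k = 0)
    {U : Set (EuclideanSpace ℝ (Fin N))} (hU : IsOpen U) (hUne : U.Nonempty)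
    (hzero : ∀ x ∈ U, 𝓕⁻ F x = 0) :
    ∀ x, 𝓕⁻ F x = 0 := by
  obtain ⟨x₀, hx₀⟩ := hUne
  obtain ⟨R, hR0, hR⟩ : ∃ R : ℝ, 0 ≤ R ∧ ∀ k ∈ S, ‖k‖ ≤ R := by
    obtain ⟨R, hR⟩ := hS.isBounded.subset_closedBall 0
    exact ⟨max R 0, le_max_right _ _,
      fun k hk => le_trans (by simpa using hR hk) (le_max_left _ _)⟩
  intro x
  set d : EuclideanSpace ℝ (Fin N) := x - x₀ with hd
  -- the integrand, as a function of a complex parameter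
  set e : EuclideanSpace ℝ (Fin N) → ℂ → ℂ := fun k z =>
    F k * Complex.exp ((2 * π * Complex.I) * (((inner ℝ k x₀) : ℂ) + z * ((inner ℝ k d) : ℂ))) with he
  set e' : EuclideanSpace ℝ (Fin N) → ℂ → ℂ := fun k z =>
    F k * ((2 * π * Complex.I) * ((inner ℝ k d) : ℂ) *
      Complex.exp ((2 * π * Complex.I) * (((inner ℝ k x₀) : ℂ) + z * ((inner ℝ k d) : ℂ)))) with he'
  set Φ : ℂ → ℂ := fun z => ∫ k, e k z with hΦ
  -- norm bound for the exponential factor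
  have hnorm_arg : ∀ (k : EuclideanSpace ℝ (Fin N)), k ∈ S → ∀ z : ℂ,
      ‖Complex.exp ((2 * π * Complex.I) * (((inner ℝ k x₀) : ℂ) + z * ((inner ℝ k d) : ℂ)))‖
        ≤ Real.exp (2 * π * (R * ‖x₀‖ + ‖z‖ * (R * ‖d‖))) := by
    intro k hk z
    rw [Complex.norm_exp]
    apply Real.exp_le_exp.2
    have h1 : ((2 * π * Complex.I) * (((inner ℝ k x₀) : ℂ) + z * ((inner ℝ k d) : ℂ))).re
        ≤ ‖(2 * π * Complex.I) * (((inner ℝ k x₀) : ℂ) + z * ((inner ℝ k d) : ℂ))‖ :=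
      Complex.re_le_norm _
    refine h1.trans ?_
    rw [norm_mul]
    have h2 : ‖(2 * π * Complex.I : ℂ)‖ = 2 * π := by
      simp [norm_mul, Complex.norm_I, Complex.norm_real, Real.norm_eq_abs,
        _root_.abs_of_nonneg Real.pi_nonneg]
    rw [h2]
    have h3 : ‖(((inner ℝ k x₀) : ℂ) + z * ((inner ℝ k d) : ℂ))‖ ≤ R * ‖x₀‖ + ‖z‖ * (R * ‖d‖) := by
      refine (norm_add_le _ _).trans ?_
      gcongr
      · rw [Complex.norm_real]
        exact (abs_real_inner_le_norm k x₀).trans (by gcongr; exact hR k hk)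
      · rw [norm_mul, Complex.norm_real]
        gcongr
        exact (abs_real_inner_le_norm k d).trans (by gcongr; exact hR k hk)
    have hpi : (0:ℝ) ≤ 2 * π := by positivity
    exact mul_le_mul_of_nonneg_left h3 hpi
  have hmeas : ∀ z : ℂ, AEStronglyMeasurable (fun k => e k z) volume := by
    intro z
    apply hF.aestronglyMeasurable.mul
    apply Continuous.aestronglyMeasurable
    apply Complex.continuous_exp.comp
    apply Continuous.mul continuous_const
    apply Continuous.add
    · exact Complex.continuous_ofReal.comp (continuous_inner.comp
        (continuous_id.prodMk continuous_const))
    · exact continuous_const.mul (Complex.continuous_ofReal.comp (continuous_inner.comp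
        (continuous_id.prodMk continuous_const)))
  have hint : ∀ z : ℂ, Integrable (fun k => e k z) := by
    intro z
    refine Integrable.mono' (hF.norm.const_mul (Real.exp (2 * π * (R * ‖x₀‖ + ‖z‖ * (R * ‖d‖)))))
      (hmeas z) (ae_of_all _ fun k => ?_)
    by_cases hk : k ∈ S
    · rw [he]
      simp only [norm_mul]
      rw [mul_comm]
      gcongr
      exact hnorm_arg k hk z
    · simp [he, hsupp k hk]
  -- differentiability
  have hdiff : Differentiable ℂ Φ := by
    intro z₀
    have key := hasDerivAt_integral_of_dominated_loc_of_deriv_le (μ := volume)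
      (F := fun z k => e k z) (F' := fun z k => e' k z)
      (bound := fun k => ‖F k‖ * (2 * π * (R * ‖d‖) *
        Real.exp (2 * π * (R * ‖x₀‖ + (‖z₀‖ + 1) * (R * ‖d‖)))))
      (x₀ := z₀) (Metric.ball_mem_nhds z₀ one_pos)
      (Eventually.of_forall fun z => hmeas z) (hint z₀)
      ?_ ?_ ?_ ?_
    · exact key.2.differentiableAt
    · -- measurability of e' z₀
      apply hF.aestronglyMeasurable.mul
      apply Continuous.aestronglyMeasurable
      apply Continuous.mul
      · exact continuous_const.mul (Complex.continuous_ofReal.comp (continuous_inner.comp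
          (continuous_id.prodMk continuous_const)))
      · apply Complex.continuous_exp.comp
        apply Continuous.mul continuous_const
        apply Continuous.add
        · exact Complex.continuous_ofReal.comp (continuous_inner.comp
            (continuous_id.prodMk continuous_const))
        · exact continuous_const.mul (Complex.continuous_ofReal.comp (continuous_inner.comp
            (continuous_id.prodMk continuous_const)))
    · -- bound
      refine ae_of_all _ fun k z hz => ?_
      by_cases hk : k ∈ S
      · rw [he']
        simp only []
        rw [norm_mul, norm_mul]
        have hz' : ‖z‖ ≤ ‖z₀‖ + 1 := by
          have := mem_ball_iff_norm.1 hz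
          calc ‖z‖ ≤ ‖z₀‖ + ‖z - z₀‖ := by
                have := norm_add_le (z - z₀) z₀; simpa [sub_add_cancel, add_comm] using this
          _ ≤ ‖z₀‖ + 1 := by linarith
        have hexp := hnorm_arg k hk z
        have hexp' : ‖Complex.exp ((2 * π * Complex.I) * (((inner ℝ k x₀) : ℂ) + z * ((inner ℝ k d) : ℂ)))‖
            ≤ Real.exp (2 * π * (R * ‖x₀‖ + (‖z₀‖ + 1) * (R * ‖d‖))) := by
          refine hexp.trans (Real.exp_le_exp.2 ?_)
          have hRd : (0:ℝ) ≤ R * ‖d‖ := by positivity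
          have h5 : ‖z‖ * (R * ‖d‖) ≤ (‖z₀‖ + 1) * (R * ‖d‖) := by gcongr
          have hpi : (0:ℝ) ≤ 2 * π := by positivity
          exact mul_le_mul_of_nonneg_left (by linarith) hpi
        have hb : ‖(2 * π * Complex.I : ℂ) * ((inner ℝ k d) : ℂ)‖ ≤ 2 * π * (R * ‖d‖) := by
          rw [norm_mul]
          have h2 : ‖(2 * π * Complex.I : ℂ)‖ = 2 * π := by
            simp [norm_mul, Complex.norm_I, Complex.norm_real, Real.norm_eq_abs,
              _root_.abs_of_nonneg Real.pi_nonneg]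
          rw [h2, Complex.norm_real, Real.norm_eq_abs]
          have h4 : |(inner ℝ k d)| ≤ R * ‖d‖ := (abs_real_inner_le_norm k d).trans
            (mul_le_mul_of_nonneg_right (hR k hk) (norm_nonneg d))
          have hpi : (0:ℝ) ≤ 2 * π := by positivity
          exact mul_le_mul_of_nonneg_left h4 hpi
        calc ‖F k‖ * (‖(2 * π * Complex.I : ℂ) * ((inner ℝ k d) : ℂ)‖ *
              ‖Complex.exp ((2 * π * Complex.I) * (((inner ℝ k x₀) : ℂ) + z * ((inner ℝ k d) : ℂ)))‖)
            ≤ ‖F k‖ * ((2 * π * (R * ‖d‖)) *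
              Real.exp (2 * π * (R * ‖x₀‖ + (‖z₀‖ + 1) * (R * ‖d‖)))) := by
              exact mul_le_mul_of_nonneg_left
                (mul_le_mul hb hexp' (norm_nonneg _) (by positivity)) (norm_nonneg _)
        _ = ‖F k‖ * (2 * π * (R * ‖d‖) *
              Real.exp (2 * π * (R * ‖x₀‖ + (‖z₀‖ + 1) * (R * ‖d‖)))) := by ring
      · simp [he', hsupp k hk]
    · exact hF.norm.mul_const _
    · -- derivative
      refine ae_of_all _ fun k z hz => ?_
      have h1 : HasDerivAt (fun w : ℂ => ((inner ℝ k x₀) : ℂ) + w * ((inner ℝ k d) : ℂ))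
          (((inner ℝ k d) : ℂ)) z := by
        simpa using ((hasDerivAt_id z).mul_const (((inner ℝ k d) : ℂ))).const_add (((inner ℝ k x₀) : ℂ))
      have h2 := (h1.const_mul ((2 * π * Complex.I : ℂ))).cexp
      have h3 := h2.const_mul (F k)
      refine h3.congr_deriv ?_
      rw [he']
      ring
  have key : ∀ t : ℝ, Φ (t : ℂ) = 𝓕⁻ F (x₀ + t • d) := by
    intro t
    rw [Real.fourierInv_eq']
    refine integral_congr_ae (ae_of_all _ fun k => ?_)
    have hinner : (inner ℝ k (x₀ + t • d)) = (inner ℝ k x₀) + t * (inner ℝ k d) := by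
      rw [inner_add_right, real_inner_smul_right]
    simp only [he, smul_eq_mul, hinner]
    rw [mul_comm]
    congr 1
    push_cast
    ring_nf
  have hanal : AnalyticOnNhd ℂ Φ Set.univ := hdiff.differentiableOn.analyticOnNhd isOpen_univ
  have hsmall : ∀ᶠ t in 𝓝 (0:ℝ), x₀ + t • d ∈ U := by
    have hc : Continuous fun t : ℝ => x₀ + t • d :=
      continuous_const.add (continuous_id.smul continuous_const)
    have h0 : (fun t : ℝ => x₀ + t • d) 0 = x₀ := by simp
    exact hc.continuousAt.eventually_mem (by simp only [zero_smul, add_zero]; exact hU.mem_nhds hx₀)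
  obtain ⟨ε, hε, hball⟩ := Metric.eventually_nhds_iff_ball.1 hsmall
  have hfreq : ∃ᶠ z in nhdsWithin (0:ℂ) {(0:ℂ)}ᶜ, Φ z = 0 := by
    have htend0 : Tendsto (fun n : ℕ => (ε / (n + 2) : ℝ)) atTop (nhds 0) := by
      apply Tendsto.div_atTop (tendsto_const_nhds)
      have h1 : Tendsto (fun n : ℕ => (n : ℝ)) atTop atTop := tendsto_natCast_atTop_atTop
      exact h1.atTop_add tendsto_const_nhds
    have htend : Tendsto (fun n : ℕ => ((ε / (n + 2) : ℝ) : ℂ))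
        atTop (nhdsWithin (0:ℂ) {(0:ℂ)}ᶜ) := by
      apply tendsto_nhdsWithin_of_tendsto_nhds_of_eventually_within
      · have h2 := (Complex.continuous_ofReal.tendsto (0:ℝ)).comp htend0
        simpa [Function.comp_def, Complex.ofReal_div, Complex.ofReal_add,
          Complex.ofReal_natCast, Complex.ofReal_ofNat] using h2
      · refine Eventually.of_forall fun n => ?_
        simp only [Set.mem_compl_iff, Set.mem_singleton_iff]
        intro hcon
        have : (ε / (n + 2) : ℝ) = 0 := by exact_mod_cast hcon
        have hn : (0:ℝ) < (n:ℝ) + 2 := by positivity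
        rw [div_eq_zero_iff] at this
        rcases this with h | h
        · exact absurd h (ne_of_gt hε)
        · linarith
    refine htend.frequently (Frequently.of_forall fun n => ?_)
    have ht : (ε / (n + 2) : ℝ) ∈ Metric.ball (0:ℝ) ε := by
      rw [Metric.mem_ball, Real.dist_eq, sub_zero]
      rw [abs_of_pos (by positivity)]
      rw [div_lt_iff₀ (by positivity)]
      nlinarith
    rw [key]
    exact hzero _ (hball _ ht)
  have hall := hanal.eqOn_zero_of_preconnected_of_frequently_eq_zero
    isPreconnected_univ (Set.mem_univ (0:ℂ)) hfreq
  have hΦ1 : Φ 1 = 0 := hall (Set.mem_univ 1)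
  have h1 := key 1
  rw [Complex.ofReal_one] at h1
  rw [h1] at hΦ1
  rw [one_smul, hd, add_sub_cancel] at hΦ1
  exact hΦ1

end AuxCore

/-- For `h ∈ B_S` and `D` a bounded measurable set with nonempty interior,
`h` is the unique fixed point of `T_h^{(D)}` on `B_S`. -/
theorem fixedPoint_unique_single (N : ℕ) (hN : 1 ≤ N)
    (S : Set (EuclideanSpace ℝ (Fin N))) (hS : IsCompact S)
    (K : Submodule ℂ (L2Space N))
    (hKset : (K : Set (L2Space N)) = {f : L2Space N | IsBandlimited S f})
    (hK : IsClosed (K : Set (L2Space N)))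
    (h : L2Space N) (hh : IsBandlimited S h)
    (D : Set (EuclideanSpace ℝ (Fin N))) (hD : MeasurableSet D)
    (hDbdd : Bornology.IsBounded D) (hDint : (interior D).Nonempty) :
    Tsingle K hK hD h h = h ∧
      ∀ f : L2Space N, IsBandlimited S f → Tsingle K hK hD h f = f → f = h := by
  letI : CompleteSpace K := hK.completeSpace_coe
  have hhK : h ∈ K := by
    have : h ∈ (K : Set (L2Space N)) := by rw [hKset]; exact hh
    exact this
  constructor
  · -- fixed point property
    have hzero : chiMul hD (h - h) = 0 := by
      rw [sub_self]
      rw [MeasureTheory.Lp.eq_zero_iff_ae_eq_zero]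
      refine (MemLp.coeFn_toLp _).trans ?_
      filter_upwards [MeasureTheory.Lp.coeFn_zero ℂ 2
        (volume : Measure (EuclideanSpace ℝ (Fin N)))] with a ha
      by_cases haD : a ∈ D
      · simp [Set.indicator_of_mem haD, ha]
      · simp [Set.indicator_of_notMem haD]
    rw [Tsingle, hzero, add_zero]
    show (K.orthogonalProjectionOnto h : L2Space N) = h
    exact Submodule.starProjection_eq_self_iff.2 hhK
  · -- uniqueness
    intro f hf hfix
    have hfK : f ∈ K := by
      have : f ∈ (K : Set (L2Space N)) := by rw [hKset]; exact hf
      exact this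
    set w : L2Space N := chiMul hD (h - f) with hw
    have hP : (K.orthogonalProjectionOnto (f + w) : L2Space N) = f := hfix
    have hPadd : (K.orthogonalProjectionOnto (f + w) : L2Space N)
        = (K.orthogonalProjectionOnto f : L2Space N) + (K.orthogonalProjectionOnto w : L2Space N) := by
      rw [map_add]; rfl
    have hPf : (K.orthogonalProjectionOnto f : L2Space N) = f :=
      Submodule.starProjection_eq_self_iff.2 hfK
    have hPw : (K.orthogonalProjectionOnto w : L2Space N) = 0 := by
      have := hP
      rw [hPadd, hPf] at this
      have h2 : f + (K.orthogonalProjectionOnto w : L2Space N) = f + 0 := by rw [this, add_zero]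
      exact add_left_cancel h2
    have hworth : w ∈ Kᗮ :=
      Submodule.orthogonalProjectionOnto_eq_zero_iff.1 (Submodule.coe_eq_zero.1 hPw)
    have huK : h - f ∈ K := K.sub_mem hhK hfK
    have hinner : (inner ℂ (h - f) w) = 0 := (Submodule.mem_orthogonal K w).1 hworth _ huK
    have hwcoe : ⇑w =ᵐ[volume] D.indicator ⇑(h - f) := MemLp.coeFn_toLp _
    have hww : (inner ℂ w w) = inner ℂ (h - f) w := by
      rw [MeasureTheory.L2.inner_def, MeasureTheory.L2.inner_def]
      refine integral_congr_ae ?_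
      filter_upwards [hwcoe] with a ha
      rw [ha]
      by_cases haD : a ∈ D
      · simp [Set.indicator_of_mem haD]
      · simp [Set.indicator_of_notMem haD]
    have hw0 : w = 0 := inner_self_eq_zero.1 (by rw [hww, hinner])
    have hind : (D.indicator ⇑(h - f) : EuclideanSpace ℝ (Fin N) → ℂ) =ᵐ[volume] 0 := by
      refine hwcoe.symm.trans ?_
      rw [hw0]
      exact MeasureTheory.Lp.coeFn_zero ℂ 2 _
    -- use the bandlimited representations
    obtain ⟨Fh, hFh_int, hFh_supp, hh_ae⟩ := hh
    obtain ⟨Ff, hFf_int, hFf_supp, hf_ae⟩ := hf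
    set Fd : EuclideanSpace ℝ (Fin N) → ℂ := Fh - Ff with hFd
    have hFd_int : Integrable Fd := hFh_int.sub hFf_int
    have hFd_supp : ∀ k ∉ S, Fd k = 0 := fun k hk => by
      simp [hFd, hFh_supp k hk, hFf_supp k hk]
    have hconv : ∀ (G : EuclideanSpace ℝ (Fin N) → ℂ), Integrable G →
        ∀ wpt : EuclideanSpace ℝ (Fin N),
        Integrable (fun v => Real.fourierChar (inner ℝ v wpt) • G v) := by
      intro G hG wpt
      refine hG.norm.mono' ?_ (Eventually.of_forall fun v => ?_)
      · exact ((Real.continuous_fourierChar.comp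
          (continuous_inner.comp (continuous_id.prodMk continuous_const))).aestronglyMeasurable.smul
            hG.aestronglyMeasurable)
      · rw [Circle.norm_smul]
    have hsub : ∀ wpt, 𝓕⁻ Fd wpt = 𝓕⁻ Fh wpt - 𝓕⁻ Ff wpt := by
      intro wpt
      simp only [Real.fourierInv_eq]
      rw [← integral_sub (hconv Fh hFh_int wpt) (hconv Ff hFf_int wpt)]
      congr 1
      ext v
      rw [hFd, Pi.sub_apply, smul_sub]
    have hGae : ⇑(h - f) =ᵐ[volume] 𝓕⁻ Fd := by
      filter_upwards [MeasureTheory.Lp.coeFn_sub h f, hh_ae, hf_ae] with a ha1 ha2 ha3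
      rw [ha1, Pi.sub_apply, ha2, ha3, hsub]
    -- 𝓕⁻ Fd vanishes a.e. on D
    have hDzero : ∀ᵐ a ∂volume, a ∈ D → 𝓕⁻ Fd a = 0 := by
      filter_upwards [hind, hGae] with a ha1 ha2
      intro haD
      rw [← ha2]
      have := ha1
      rwa [Set.indicator_of_mem haD] at this
    -- continuity of 𝓕⁻ Fd
    have hGcont : Continuous (𝓕⁻ Fd) := by
      refine VectorFourier.fourierIntegral_continuous Real.continuous_fourierChar ?_ hFd_int
      have : Continuous fun p : (EuclideanSpace ℝ (Fin N)) × (EuclideanSpace ℝ (Fin N)) =>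
          (inner ℝ p.1 p.2) := continuous_inner
      exact this.neg
    -- 𝓕⁻ Fd vanishes on the interior of D
    have hUzero : ∀ x ∈ interior D, 𝓕⁻ Fd x = 0 := by
      have hmeasint : MeasurableSet (interior D) := isOpen_interior.measurableSet
      have hrestrict0 : ∀ᵐ a ∂(volume.restrict (interior D)), 𝓕⁻ Fd a = 0 := by
        rw [MeasureTheory.ae_restrict_iff' hmeasint]
        filter_upwards [hDzero] with a ha haI
        exact ha (interior_subset haI)
      have hrestrict : (𝓕⁻ Fd) =ᵐ[volume.restrict (interior D)]
          (fun _ => (0:ℂ)) := hrestrict0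
      have := MeasureTheory.Measure.eqOn_of_ae_eq hrestrict hGcont.continuousOn
        continuousOn_const (by rw [interior_interior]; exact subset_closure)
      exact this
    have hall : ∀ x, 𝓕⁻ Fd x = 0 :=
      fourierInv_zero_of_zero_on_open hFd_int hS hFd_supp isOpen_interior hDint hUzero
    have hsubzero : h - f = 0 := by
      rw [MeasureTheory.Lp.eq_zero_iff_ae_eq_zero]
      filter_upwards [hGae] with a ha
      rw [ha, hall]
      rfl
    have : h = f := by
      have := sub_eq_zero.1 hsubzero
      exact this
    exact this.symm

end
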